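/- Let α > 0, λ > 0, y ∈ ℝ^N, and suppose x* ∈ prox_{λ r_α}(y) is a nonzero minimizer satisfying the optimality condition p = y/λ - (1/λ - α/‖x*‖₂)x* ∈ ∂‖x*‖₁. Then for every x ∈ ℝ^N, F(x*) - F(x) ≤ (α/(2‖x*‖₂) - 1/(2λ))‖x* - x‖₂², where F(x) = ‖x‖₁ - α‖x‖₂ + (1/(2λ))‖x - y‖₂². -/

import Mathlib

open Finset Filter Set
open scoped RealInnerProductSpace

noncomputable def norm1 {N : ℕ} (x : EuclideanSpace ℝ (Fin N)) : ℝ := ∑ i, |x i|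

noncomputable def normInf {N : ℕ} (x : EuclideanSpace ℝ (Fin N)) : ℝ := ⨆ i, |x i|

noncomputable def Fobj {N : ℕ} (a lam : ℝ) (y x : EuclideanSpace ℝ (Fin N)) : ℝ :=
  norm1 x - a * ‖x‖ + 1 / (2 * lam) * ‖x - y‖ ^ 2
/-- `p` is a subgradient of the ℓ¹ norm at `x`. -/
def l1Subdiff {N : ℕ} (x p : EuclideanSpace ℝ (Fin N)) : Prop :=
  ∀ i, (x i ≠ 0 → p i = Real.sign (x i)) ∧ (x i = 0 → |p i| ≤ 1)

theorem stmt6 {N : ℕ} (a lam : ℝ) (hlam : 0 < lam) (ha : 0 < a)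
    (y xs : EuclideanSpace ℝ (Fin N)) (hxs : xs ≠ 0)
    (hmin : IsMinOn (Fobj a lam y) Set.univ xs)
    (hp : l1Subdiff xs ((1 / lam) • y - (1 / lam - a / ‖xs‖) • xs)) :
    ∀ x, Fobj a lam y xs - Fobj a lam y x ≤
      (a / (2 * ‖xs‖) - 1 / (2 * lam)) * ‖xs - x‖ ^ 2 := by
  intro x
  set p : EuclideanSpace ℝ (Fin N) := (1 / lam) • y - (1 / lam - a / ‖xs‖) • xs with hpdef
  have hs : (0:ℝ) < ‖xs‖ := norm_pos_iff.mpr hxs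
  -- subgradient inequality: ⟪p, x - xs⟫ ≤ norm1 x - norm1 xs
  have hsub : ⟪p, x - xs⟫ ≤ norm1 x - norm1 xs := by
    have : ⟪p, x - xs⟫ = ∑ i, p i * (x i - xs i) := by
      rw [PiLp.inner_apply]
      simp [RCLike.inner_apply]
      exact Finset.sum_congr rfl (fun i _ => mul_comm _ _)
    rw [this, norm1, norm1, ← Finset.sum_sub_distrib]
    apply Finset.sum_le_sum
    intro i _
    have hb : |p i| ≤ 1 := by
      by_cases h : xs i = 0
      · exact (hp i).2 h
      · rw [(hp i).1 h]
        rcases lt_trichotomy (xs i) 0 with h1 | h1 | h1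
        · simp [Real.sign_of_neg h1]
        · exact absurd h1 h
        · simp [Real.sign_of_pos h1]
    have h1 : p i * x i ≤ |x i| := by
      calc p i * x i ≤ |p i * x i| := le_abs_self _
        _ = |p i| * |x i| := abs_mul _ _
        _ ≤ 1 * |x i| := by
            exact mul_le_mul_of_nonneg_right hb (abs_nonneg _)
        _ = |x i| := one_mul _
    have h2 : |xs i| ≤ p i * xs i := by
      by_cases h : xs i = 0
      · simp [h]
      · rw [(hp i).1 h]
        rcases lt_trichotomy (xs i) 0 with h1 | h1 | h1
        · rw [Real.sign_of_neg h1, abs_of_neg h1]; linarith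
        · exact absurd h1 h
        · rw [Real.sign_of_pos h1, abs_of_pos h1]; linarith
    nlinarith
  -- expand the inner product with p
  have hpexp : ⟪p, x - xs⟫ =
      (1/lam) * ⟪y, x⟫ - (1/lam) * ⟪y, xs⟫
      - (1/lam - a/‖xs‖) * ⟪xs, x⟫ + (1/lam - a/‖xs‖) * (‖xs‖^2) := by
    rw [hpdef]
    rw [inner_sub_left, inner_smul_left, inner_smul_left, inner_sub_right,
      inner_sub_right, real_inner_self_eq_norm_sq]
    simp only [starRingEnd_apply, star_trivial]
    ring
  -- norm expansions
  have e1 : ‖xs - x‖^2 = ‖xs‖^2 - 2*⟪xs,x⟫ + ‖x‖^2 := norm_sub_sq_real xs x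
  have e2 : ‖xs - y‖^2 = ‖xs‖^2 - 2*⟪xs,y⟫ + ‖y‖^2 := norm_sub_sq_real xs y
  have e3 : ‖x - y‖^2 = ‖x‖^2 - 2*⟪x,y⟫ + ‖y‖^2 := norm_sub_sq_real x y
  have cs : ⟪xs, x⟫ ≤ ‖xs‖ * ‖x‖ := real_inner_le_norm xs x
  have hyx : ⟪y, x⟫ = ⟪x, y⟫ := real_inner_comm x y
  have hyxs : ⟪y, xs⟫ = ⟪xs, y⟫ := real_inner_comm xs y
  have amgm : ‖xs‖ * ‖x‖ ≤ (‖xs‖^2 + ‖x‖^2)/2 := by nlinarith [sq_nonneg (‖xs‖ - ‖x‖)]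
  have hcs2 : a * ‖x‖ - (a/‖xs‖) * ⟪xs,x⟫ ≤
      (a/(2*‖xs‖)) * (‖xs‖^2 - 2*⟪xs,x⟫ + ‖x‖^2) := by
    have h1 : ‖xs‖ * ‖x‖ * ‖xs‖ ≤ ((‖xs‖^2 + ‖x‖^2)/2) * ‖xs‖ :=
      mul_le_mul_of_nonneg_right amgm hs.le
    have hc : a/‖xs‖ * ‖xs‖ = a := div_mul_cancel₀ a hs.ne'
    have hc2 : a/(2*‖xs‖) = (a/‖xs‖)/2 := by rw [div_div, mul_comm]
    have hcpos : 0 < a/‖xs‖ := div_pos ha hs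
    rw [hc2]
    nlinarith [mul_le_mul_of_nonneg_left amgm hcpos.le]
  -- put everything together
  simp only [Fobj]
  have hlam' : (1:ℝ)/lam > 0 := by positivity
  -- F xs - F x ≤ -(⟪p, x - xs⟫) + a‖x‖ - a‖xs‖ + (1/(2λ))(‖xs-y‖² - ‖x-y‖²)
  have key : norm1 xs - norm1 x ≤ -⟪p, x - xs⟫ := by linarith
  rw [hpexp] at key
  have hfield : (a/‖xs‖) * ‖xs‖^2 = a * ‖xs‖ := by
    field_simp
  have g1 : a/(2*‖xs‖) = (a/‖xs‖)/2 := by rw [div_div, mul_comm]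
  have g2 : 1/(2*lam) = (1/lam)/2 := by rw [div_div, one_div, one_div, mul_comm]
  rw [e1, e2, e3, g1, g2]
  rw [g1] at hcs2
  rw [hyx, hyxs] at key
  linarith [hcs2, key, hfield]
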